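/- Let m be a finite multiset of real numbers each of the form 2^{-k} for some natural number k, and let S be the sum of m. Then m can be partitioned into ⌊S⌋ sub-multisets each with sum exactly 1, together with (if S is not an integer) one remaining sub-multiset with sum S − ⌊S⌋ < 1. -/

import Mathlib

namespace Stmt12Aux

noncomputable def f (k : ℕ) : ℝ := (1/2 : ℝ)^k

noncomputable def g (E : Multiset ℕ) : ℝ := (E.map f).sum

lemma f_pos (k : ℕ) : 0 < f k := by rw [f]; positivity

lemma f_eq (k : ℕ) : (2:ℝ)^(-(k:ℤ)) = f k := by
  simp [f, zpow_neg, ← inv_pow, one_div]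

lemma g_cons (a : ℕ) (s : Multiset ℕ) : g (a ::ₘ s) = f a + g s := by
  simp [g]

lemma g_add (s t : Multiset ℕ) : g (s + t) = g s + g t := by
  simp [g]

lemma g_nonneg (s : Multiset ℕ) : 0 ≤ g s := by
  refine Multiset.sum_nonneg ?_
  intro x hx
  obtain ⟨k, _, rfl⟩ := Multiset.mem_map.mp hx
  exact (f_pos k).le

lemma geo (N : ℕ) : ∑ k ∈ Finset.Icc 1 N, f k = 1 - (1/2:ℝ)^N := by
  induction N with
  | zero => simp
  | succ N ih =>
    rw [Finset.sum_Icc_succ_top (by omega : 1 ≤ N + 1), ih]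
    simp only [f]
    ring

lemma nodup_lt (E : Multiset ℕ) (hnd : E.Nodup) (h0 : 0 ∉ E) : g E < 1 := by
  let s : Finset ℕ := ⟨E, hnd⟩
  have hg : g E = ∑ k ∈ s, f k := rfl
  set N := s.sup id with hN
  have hsub : s ⊆ Finset.Icc 1 N := by
    intro k hk
    refine Finset.mem_Icc.mpr ⟨?_, Finset.le_sup (f := id) hk⟩
    have : k ≠ 0 := by
      intro h; subst h; exact h0 hk
    omega
  have h1 : ∑ k ∈ s, f k ≤ ∑ k ∈ Finset.Icc 1 N, f k :=
    Finset.sum_le_sum_of_subset_of_nonneg hsub (fun k _ _ => (f_pos k).le)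
  rw [hg]
  calc ∑ k ∈ s, f k ≤ ∑ k ∈ Finset.Icc 1 N, f k := h1
    _ = 1 - (1/2:ℝ)^N := geo N
    _ < 1 := by
        have : (0:ℝ) < (1/2:ℝ)^N := by positivity
        linarith

lemma extract : ∀ n (E : Multiset ℕ), E.card ≤ n → 1 ≤ g E → ∃ P ≤ E, g P = 1 := by
  intro n
  induction n with
  | zero =>
    intro E hc hg
    interval_cases h : E.card
    · rw [Multiset.card_eq_zero] at h
      subst h
      simp [g] at hg
      linarith
  | succ n ih =>
    intro E hc hg
    by_cases h0 : (0:ℕ) ∈ E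
    · refine ⟨{0}, Multiset.singleton_le.mpr h0, ?_⟩
      simp [g, f]
    · by_cases hnd : E.Nodup
      · exact absurd hg (by linarith [nodup_lt E hnd h0])
      · rw [Multiset.nodup_iff_count_le_one] at hnd
        push_neg at hnd
        obtain ⟨k, hk2⟩ := hnd
        have hk2 : 2 ≤ E.count k := hk2
        have hrep : Multiset.replicate 2 k ≤ E :=
          (Multiset.le_count_iff_replicate_le).mp hk2
        have hkmem : k ∈ E := by
          rw [← Multiset.count_pos]; omega
        have hk0 : k ≠ 0 := fun h => h0 (h ▸ hkmem)
        set rest := E - Multiset.replicate 2 k with hrest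
        have hE : Multiset.replicate 2 k + rest = E := by
          rw [hrest, add_tsub_cancel_of_le hrep]
        have hcard : rest.card = E.card - 2 := by
          have := congrArg Multiset.card hE
          simp at this
          omega
        have hEcard : 2 ≤ E.card := by
          have := Multiset.card_le_card hrep
          simpa using this
        set E' := (k - 1) ::ₘ rest with hE'
        have hgE' : g E' = g E := by
          rw [hE', g_cons, ← hE, g_add]
          have : g (Multiset.replicate 2 k) = f k + f k := by
            simp [g, Multiset.replicate_succ]
          rw [this]
          have hf : f (k - 1) = f k + f k := by
            have hk1 : k - 1 + 1 = k := by omega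
            have hps := pow_succ (1/2:ℝ) (k-1)
            rw [hk1] at hps
            rw [f, f, hps]
            ring
          linarith [hf]
        have hcE' : E'.card ≤ n := by
          rw [hE', Multiset.card_cons, hcard]
          omega
        obtain ⟨P', hP'le, hP'⟩ := ih E' hcE' (by rw [hgE']; exact hg)
        by_cases hmem : (k - 1) ∈ P'
        · refine ⟨k ::ₘ k ::ₘ (P'.erase (k-1)), ?_, ?_⟩
          · have h1 : P'.erase (k-1) ≤ E'.erase (k-1) :=
              Multiset.erase_le_erase _ hP'le
            have h2 : E'.erase (k-1) = rest := by
              rw [hE', Multiset.erase_cons_head]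
            rw [← hE]
            have : Multiset.replicate 2 k + rest = k ::ₘ k ::ₘ rest := by
              simp [Multiset.replicate_succ]
            rw [this]
            exact Multiset.cons_le_cons _ (Multiset.cons_le_cons _ (h2 ▸ h1))
          · have hP'eq : (k-1) ::ₘ P'.erase (k-1) = P' := Multiset.cons_erase hmem
            have := hP'
            rw [← hP'eq, g_cons] at this
            rw [g_cons, g_cons]
            have hf : f (k - 1) = f k + f k := by
              have hk1 : k - 1 + 1 = k := by omega
              have hps := pow_succ (1/2:ℝ) (k-1)
              rw [hk1] at hps
              rw [f, f, hps]
              ring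
            linarith
        · refine ⟨P', ?_, hP'⟩
          have hle : P' ≤ rest := by
            rw [Multiset.le_iff_count]
            intro b
            rw [Multiset.le_iff_count] at hP'le
            have := hP'le b
            by_cases hb : b = k - 1
            · subst hb
              have : Multiset.count (k-1) P' = 0 := Multiset.count_eq_zero.mpr hmem
              omega
            · rw [hE', Multiset.count_cons_of_ne hb] at this
              exact this
          exact le_trans hle (le_trans (le_of_eq rfl) (hE ▸ Multiset.le_add_left _ _))

lemma preimage : ∀ (m : Multiset ℝ), (∀ x ∈ m, ∃ k : ℕ, x = (2:ℝ)^(-(k:ℤ))) →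
    ∃ E : Multiset ℕ, m = E.map f := by
  intro m
  induction m using Multiset.induction with
  | empty => intro _; exact ⟨0, rfl⟩
  | cons a s ih =>
    intro hm
    obtain ⟨k, hk⟩ := hm a (Multiset.mem_cons_self a s)
    obtain ⟨E, hE⟩ := ih (fun x hx => hm x (Multiset.mem_cons_of_mem hx))
    exact ⟨k ::ₘ E, by rw [Multiset.map_cons, ← hE, hk, f_eq]⟩

lemma main_aux : ∀ (n : ℕ) (m : Multiset ℝ),
    (∀ x ∈ m, ∃ k : ℕ, x = (2:ℝ)^(-(k:ℤ))) → ⌊m.sum⌋.toNat = n →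
    ∃ (parts : Multiset (Multiset ℝ)) (r : Multiset ℝ),
      parts.sum + r = m ∧
      (parts.card : ℤ) = ⌊m.sum⌋ ∧
      (∀ p ∈ parts, (p.map id).sum = 1) ∧
      (r.map id).sum = m.sum - (⌊m.sum⌋ : ℝ) ∧
      (r.map id).sum < 1 := by
  intro n
  induction n with
  | zero =>
    intro m hm hfl
    have hnn : 0 ≤ m.sum := by
      refine Multiset.sum_nonneg fun x hx => ?_
      obtain ⟨k, rfl⟩ := hm x hx
      positivity
    have hfl0 : ⌊m.sum⌋ = 0 := by
      have h1 : 0 ≤ ⌊m.sum⌋ := Int.floor_nonneg.mpr hnn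
      omega
    refine ⟨0, m, by simp, by simp [hfl0], by simp, by simp [hfl0], ?_⟩
    have := Int.lt_floor_add_one m.sum
    rw [hfl0] at this
    simpa using this
  | succ n ih =>
    intro m hm hfl
    have hnn : 0 ≤ m.sum := by
      refine Multiset.sum_nonneg fun x hx => ?_
      obtain ⟨k, rfl⟩ := hm x hx
      positivity
    have hflnn : 0 ≤ ⌊m.sum⌋ := Int.floor_nonneg.mpr hnn
    have hfleq : ⌊m.sum⌋ = (n : ℤ) + 1 := by omega
    have hS1 : 1 ≤ m.sum := by
      have := Int.floor_le m.sum
      rw [hfleq] at this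
      have : ((n:ℝ) + 1 : ℝ) ≤ m.sum := by exact_mod_cast this
      have hn : (0:ℝ) ≤ (n:ℝ) := Nat.cast_nonneg n
      linarith
    obtain ⟨E, hE⟩ := preimage m hm
    have hgE : g E = m.sum := by rw [hE]; rfl
    obtain ⟨P, hPle, hP⟩ := extract E.card E le_rfl (by rw [hgE]; exact hS1)
    set p : Multiset ℝ := P.map f with hp
    have hple : p ≤ m := by rw [hE, hp]; exact Multiset.map_le_map hPle
    have hpsum : p.sum = 1 := by rw [hp]; exact hP
    set m' := m - p with hm'
    have hm'p : m' + p = m := tsub_add_cancel_of_le hple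
    have hm'sum : m'.sum = m.sum - 1 := by
      have := congrArg Multiset.sum hm'p
      rw [Multiset.sum_add, hpsum] at this
      linarith
    have hm'mem : ∀ x ∈ m', ∃ k : ℕ, x = (2:ℝ)^(-(k:ℤ)) :=
      fun x hx => hm x (Multiset.mem_of_le (Multiset.sub_le_self _ _) hx)
    have hm'fl : ⌊m'.sum⌋ = (n : ℤ) := by
      rw [hm'sum]
      have : m.sum - 1 = m.sum - ((1:ℤ):ℝ) := by norm_num
      rw [this, Int.floor_sub_intCast, hfleq]
      ring
    obtain ⟨parts', r, h1, h2, h3, h4, h5⟩ := ih m' hm'mem (by rw [hm'fl]; simp)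
    refine ⟨p ::ₘ parts', r, ?_, ?_, ?_, ?_, h5⟩
    · rw [Multiset.sum_cons, add_assoc, h1, add_comm, hm'p]
    · rw [Multiset.card_cons, hfleq]
      have hc : (Multiset.card parts' : ℤ) = (n : ℤ) := by rw [h2, hm'fl]
      push_cast
      omega
    · intro q hq
      rcases Multiset.mem_cons.mp hq with h | h
      · rw [h, Multiset.map_id, hpsum]
      · exact h3 q h
    · rw [h4, hm'sum,
        show m.sum - 1 = m.sum - ((1:ℤ):ℝ) by norm_num, Int.floor_sub_intCast]
      push_cast
      ring

end Stmt12Aux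

theorem stmt12 (m : Multiset ℝ)
    (hm : ∀ x ∈ m, ∃ k : ℕ, x = (2:ℝ)^(-(k:ℤ))) :
    ∃ (parts : Multiset (Multiset ℝ)) (r : Multiset ℝ),
      parts.sum + r = m ∧
      (parts.card : ℤ) = ⌊m.sum⌋ ∧
      (∀ p ∈ parts, (p.map id).sum = 1) ∧
      (r.map id).sum = m.sum - (⌊m.sum⌋ : ℝ) ∧
      (r.map id).sum < 1 := by
  exact Stmt12Aux.main_aux ⌊m.sum⌋.toNat m hm rfl
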